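/- arXiv:2004.06091 — 3 statements merged into one kernel-verified Lean document; each statement's English description precedes it below -/
import Mathlib

section
/- Fix an integer k ≥ 1, probabilities p_1, …, p_k > 0 with Σ_{i=1}^{k} p_i = 1, and a > 0. For ℓ ∈ ℝ^k write E[L] = Σ_{i=1}^{k} p_i ℓ_i and E[L²] = Σ_{i=1}^{k} p_i ℓ_i², and define f(ℓ) = (E[L²] + 2a·E[L] + 2a²)/(2(E[L] + a)) + E[L]. Let F = {ℓ ∈ ℝ^k : ℓ_i ≥ 0 for all i, and Σ_{i=1}^{k} 2^{−ℓ_i} ≤ 1}. If ℓ* ∈ F minimizes f over F, then Σ_{i=1}^{k} 2^{−ℓ*_i} = 1. -/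
/-- Lemma 1 of the paper. For probabilities `p i > 0` summing to `1` and
`a > 0`, any minimizer over the Kraft-feasible set
`F = {ℓ : ∀ i, 0 ≤ ℓ i, ∑ i 2^{-ℓ i} ≤ 1}` of the average age
`f(ℓ) = (E[L²] + 2a E[L] + 2a²)/(2(E[L] + a)) + E[L]` satisfies the Kraft inequality with
equality: `∑ i 2^{-ℓ* i} = 1`. -/
theorem stmt_4 (k : ℕ) (hk : 1 ≤ k)
    (p : Fin k → ℝ) (hp : ∀ i, 0 < p i) (hpsum : ∑ i, p i = 1)
    (a : ℝ) (ha : 0 < a)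
    (f : (Fin k → ℝ) → ℝ)
    (hf : f = fun ℓ =>
      ((∑ i, p i * (ℓ i) ^ 2) + 2 * a * (∑ i, p i * ℓ i) + 2 * a ^ 2) /
        (2 * ((∑ i, p i * ℓ i) + a)) + ∑ i, p i * ℓ i)
    (F : Set (Fin k → ℝ))
    (hF : F = {ℓ | (∀ i, 0 ≤ ℓ i) ∧ ∑ i, (2 : ℝ) ^ (-(ℓ i)) ≤ 1})
    (ℓs : Fin k → ℝ) (hmem : ℓs ∈ F) (hmin : ∀ ℓ ∈ F, f ℓs ≤ f ℓ) :
    ∑ i, (2 : ℝ) ^ (-(ℓs i)) = 1 := by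
  subst hf hF
  obtain ⟨hnn, hle⟩ := hmem
  by_contra hne
  have hs : ∑ i, (2 : ℝ) ^ (-(ℓs i)) < 1 := lt_of_le_of_ne hle hne
  -- every ℓs i is strictly positive
  have hpos : ∀ i, 0 < ℓs i := by
    intro i
    by_contra hle'
    have hzero : ℓs i = 0 := le_antisymm (not_lt.mp hle') (hnn i)
    have h1 : (1 : ℝ) ≤ ∑ j, (2 : ℝ) ^ (-(ℓs j)) := by
      have : (2:ℝ) ^ (-(ℓs i)) = 1 := by rw [hzero]; simp
      calc (1:ℝ) = (2:ℝ) ^ (-(ℓs i)) := this.symm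
        _ ≤ ∑ j, (2 : ℝ) ^ (-(ℓs j)) :=
          Finset.single_le_sum (f := fun j => (2:ℝ) ^ (-(ℓs j)))
            (fun j _ => Real.rpow_nonneg (by norm_num) _) (Finset.mem_univ i)
    linarith
  set M1 := ∑ i, p i * ℓs i with hM1def
  set M2 := ∑ i, p i * (ℓs i) ^ 2 with hM2def
  have hM1 : 0 < M1 :=
    Finset.sum_pos (fun i _ => mul_pos (hp i) (hpos i)) ⟨⟨0, hk⟩, Finset.mem_univ _⟩
  have hM2 : 0 ≤ M2 :=
    Finset.sum_nonneg fun i _ => mul_nonneg (hp i).le (sq_nonneg _)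
  -- continuity: find t ∈ (0,1) with Kraft sum of t•ℓs still ≤ 1
  have hcont : Continuous (fun t : ℝ => ∑ i, (2 : ℝ) ^ (-(t * ℓs i))) := by
    apply continuous_finset_sum
    intro i _
    exact (continuous_const.rpow (by fun_prop) (fun x => Or.inl (by norm_num)))
  have hnhds : (fun t : ℝ => ∑ i, (2 : ℝ) ^ (-(t * ℓs i))) ⁻¹' Set.Iio 1 ∈ nhds (1:ℝ) := by
    apply hcont.continuousAt.preimage_mem_nhds
    apply Iio_mem_nhds
    simpa using hs
  obtain ⟨ε, hε, hball⟩ := Metric.mem_nhds_iff.mp hnhds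
  set t : ℝ := max (1/2) (1 - ε/2) with htdef
  have ht1 : t < 1 := by
    apply max_lt (by norm_num) (by linarith)
  have ht0 : 0 < t := lt_of_lt_of_le (by norm_num) (le_max_left _ _)
  have htball : t ∈ Metric.ball (1:ℝ) ε := by
    rw [Metric.mem_ball, Real.dist_eq, abs_lt]
    constructor
    · have : 1 - ε/2 ≤ t := le_max_right _ _
      linarith
    · linarith
  have htF : (fun i => t * ℓs i) ∈ {ℓ : Fin k → ℝ | (∀ i, 0 ≤ ℓ i) ∧ ∑ i, (2 : ℝ) ^ (-(ℓ i)) ≤ 1} := by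
    refine ⟨fun i => mul_nonneg ht0.le (hnn i), ?_⟩
    have := hball htball
    exact le_of_lt this
  have hless := hmin _ htF
  simp only at hless
  -- compute the sums for t • ℓs
  have e1 : ∑ i, p i * (t * ℓs i) = t * M1 := by
    rw [hM1def, Finset.mul_sum]; congr 1; ext i; ring
  have e2 : ∑ i, p i * (t * ℓs i) ^ 2 = t^2 * M2 := by
    rw [hM2def, Finset.mul_sum]; congr 1; ext i; ring
  rw [e1, e2] at hless
  have hd1 : 0 < 2 * (M1 + a) := by linarith
  have hd2 : 0 < 2 * (t * M1 + a) := by nlinarith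
  rw [div_add' _ _ _ hd1.ne', div_add' _ _ _ hd2.ne', div_le_div_iff₀ hd1 hd2] at hless
  nlinarith [mul_nonneg (mul_nonneg hM2 (sub_nonneg.mpr ht1.le)) (by nlinarith : (0:ℝ) ≤ t * M1 + a * (1 + t)),
    mul_pos (mul_pos (mul_pos (sub_pos.mpr ht1) hM1) (by linarith : (0:ℝ) < M1 + a)) (by nlinarith : (0:ℝ) < t * M1 + a)]
end

section
/- Fix an integer k ≥ 1, probabilities p_1, …, p_k > 0 with Σ_{i=1}^{k} p_i = 1, and a > 0. For ℓ ∈ ℝ^k write E[L] = Σ_{i=1}^{k} p_i ℓ_i and E[L²] = Σ_{i=1}^{k} p_i ℓ_i², let F = {ℓ ∈ ℝ^k : ℓ_i ≥ 0 for all i, and Σ_{i=1}^{k} 2^{−ℓ_i} ≤ 1}, define f(ℓ) = (E[L²] + 2a·E[L] + 2a²)/(2(E[L] + a)) + E[L] and g(ℓ, θ) = (1/2)E[L²] + (E[L])² + (2a − θ)E[L] + a² − θa. If inf_{ℓ ∈ F} g(ℓ, θ) = 0 for some θ ∈ ℝ, then inf_{ℓ ∈ F} f(ℓ) = θ. -/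
/-- fractional programming. With the Kraft-feasible set
`F = {ℓ : ∀ i, 0 ≤ ℓ i, ∑ i 2^{-ℓ i} ≤ 1}`, the age objective
`f(ℓ) = (E[L²] + 2a E[L] + 2a²)/(2(E[L] + a)) + E[L]` and the auxiliary objective
`g(ℓ, θ) = (1/2)E[L²] + (E[L])² + (2a − θ)E[L] + a² − θa`: if `inf_{ℓ∈F} g(ℓ,θ) = 0` for
some `θ`, then `inf_{ℓ∈F} f(ℓ) = θ`. -/
theorem stmt_6 (k : ℕ) (hk : 1 ≤ k)
    (p : Fin k → ℝ) (hp : ∀ i, 0 < p i) (hpsum : ∑ i, p i = 1)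
    (a : ℝ) (ha : 0 < a)
    (F : Set (Fin k → ℝ))
    (hF : F = {ℓ | (∀ i, 0 ≤ ℓ i) ∧ ∑ i, (2 : ℝ) ^ (-(ℓ i)) ≤ 1})
    (f : (Fin k → ℝ) → ℝ)
    (hf : f = fun ℓ =>
      ((∑ i, p i * (ℓ i) ^ 2) + 2 * a * (∑ i, p i * ℓ i) + 2 * a ^ 2) /
        (2 * ((∑ i, p i * ℓ i) + a)) + ∑ i, p i * ℓ i)
    (g : (Fin k → ℝ) → ℝ → ℝ)
    (hg : g = fun ℓ θ =>
      (1 / 2) * (∑ i, p i * (ℓ i) ^ 2) + (∑ i, p i * ℓ i) ^ 2 +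
        (2 * a - θ) * (∑ i, p i * ℓ i) + a ^ 2 - θ * a)
    (θ : ℝ) (hzero : sInf ((fun ℓ => g ℓ θ) '' F) = 0) :
    sInf (f '' F) = θ := by
  -- Nonnegativity of E[L] on F
  have hEnn : ∀ ℓ ∈ F, (0:ℝ) ≤ ∑ i, p i * ℓ i := by
    intro ℓ hℓ
    rw [hF] at hℓ
    exact Finset.sum_nonneg fun i _ => mul_nonneg (hp i).le (hℓ.1 i)
  have hpos : ∀ ℓ ∈ F, (0:ℝ) < (∑ i, p i * ℓ i) + a := fun ℓ hℓ =>
    add_pos_of_nonneg_of_pos (hEnn ℓ hℓ) ha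
  -- Key identity
  have key : ∀ ℓ ∈ F, g ℓ θ = ((∑ i, p i * ℓ i) + a) * (f ℓ - θ) := by
    intro ℓ hℓ
    have h := hpos ℓ hℓ
    rw [hf, hg]
    field_simp
    ring
  -- F is nonempty
  have hFne : F.Nonempty := by
    refine ⟨fun _ => (k:ℝ), ?_⟩
    rw [hF]
    constructor
    · intro i; positivity
    · have h2 : ((2:ℝ)) ^ (-(k:ℝ)) = ((2:ℝ) ^ (k:ℕ))⁻¹ := by
        rw [Real.rpow_neg (by norm_num), Real.rpow_natCast]
      rw [Finset.sum_const, Finset.card_univ, Fintype.card_fin, nsmul_eq_mul, h2]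
      rw [mul_inv_le_iff₀ (by positivity), one_mul]
      exact_mod_cast (Nat.lt_two_pow_self (n := k)).le
  -- Variance inequality
  have hvar : ∀ ℓ : Fin k → ℝ, (∑ i, p i * ℓ i) ^ 2 ≤ ∑ i, p i * (ℓ i) ^ 2 := by
    intro ℓ
    have h := Finset.sum_mul_sq_le_sq_mul_sq Finset.univ
      (fun i => Real.sqrt (p i)) (fun i => Real.sqrt (p i) * ℓ i)
    have h1 : ∀ i : Fin k, Real.sqrt (p i) * (Real.sqrt (p i) * ℓ i) = p i * ℓ i := by
      intro i
      rw [← mul_assoc, Real.mul_self_sqrt (hp i).le]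
    have h2 : ∀ i : Fin k, Real.sqrt (p i) ^ 2 = p i := fun i => Real.sq_sqrt (hp i).le
    have h3 : ∀ i : Fin k, (Real.sqrt (p i) * ℓ i) ^ 2 = p i * ℓ i ^ 2 := by
      intro i
      rw [mul_pow, Real.sq_sqrt (hp i).le]
    simp only [h1] at h
    calc (∑ i, p i * ℓ i) ^ 2
        ≤ (∑ i, Real.sqrt (p i) ^ 2) * ∑ i, (Real.sqrt (p i) * ℓ i) ^ 2 := h
      _ = ∑ i, p i * ℓ i ^ 2 := by
          rw [Finset.sum_congr rfl fun i _ => h2 i,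
            Finset.sum_congr rfl fun i _ => h3 i, hpsum, one_mul]
  -- g is bounded below on F
  have hgLB : ∀ x ∈ (fun ℓ => g ℓ θ) '' F,
      a ^ 2 - θ * a - (2 * a - θ) ^ 2 / 6 ≤ x := by
    rintro x ⟨ℓ, hℓ, rfl⟩
    have hm := hEnn ℓ hℓ
    have hv := hvar ℓ
    rw [hg]
    dsimp only
    nlinarith [sq_nonneg ((∑ i, p i * ℓ i) + (2 * a - θ) / 3)]
  have hgBdd : BddBelow ((fun ℓ => g ℓ θ) '' F) := ⟨_, hgLB⟩
  -- g ≥ 0 on F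
  have hgnn : ∀ ℓ ∈ F, 0 ≤ g ℓ θ := by
    intro ℓ hℓ
    rw [← hzero]
    exact csInf_le hgBdd ⟨ℓ, hℓ, rfl⟩
  -- f ≥ θ on F
  have hfLB : ∀ ℓ ∈ F, θ ≤ f ℓ := by
    intro ℓ hℓ
    have h1 := hgnn ℓ hℓ
    rw [key ℓ hℓ] at h1
    have h2 := hpos ℓ hℓ
    nlinarith
  have hfBdd : BddBelow (f '' F) := ⟨θ, by rintro x ⟨ℓ, hℓ, rfl⟩; exact hfLB ℓ hℓ⟩
  refine le_antisymm ?_ (le_csInf (hFne.image f) (by rintro x ⟨ℓ, hℓ, rfl⟩; exact hfLB ℓ hℓ))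
  -- sInf (f '' F) ≤ θ
  refine le_of_forall_pos_le_add ?_
  intro ε hε
  obtain ⟨x, hx, hxlt⟩ := Real.lt_sInf_add_pos (hFne.image (fun ℓ => g ℓ θ))
    (mul_pos hε ha)
  obtain ⟨ℓ, hℓ, rfl⟩ := hx
  rw [hzero, zero_add] at hxlt
  have h1 := key ℓ hℓ
  have h2 := hpos ℓ hℓ
  have h3 := hEnn ℓ hℓ
  have hflt : f ℓ < θ + ε := by nlinarith
  calc sInf (f '' F) ≤ f ℓ := csInf_le hfBdd ⟨ℓ, hℓ, rfl⟩
    _ ≤ θ + ε := hflt.le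
end

section
/- Fix an integer k ≥ 1, probabilities p_1, …, p_k > 0 with Σ_{i=1}^{k} p_i = 1, q ∈ (0,1), and λ > 0. For c ≥ 0 let â(c) = c(1/q − 1) + 1/(λq) and d(c) = ((2−q)(1−q)/q²)c² + (4(1−q)/(λq²))c + 2/(λq)². For ℓ ∈ ℝ^k write E[L] = Σ_{i=1}^{k} p_i ℓ_i and E[L²] = Σ_{i=1}^{k} p_i ℓ_i², and define Δ_e(ℓ, c) = (E[L²] + 2â(c)·E[L] + d(c))/(2(E[L] + â(c))) + E[L]. Let G = {(ℓ, c) : ℓ_i ≥ 0 for all i, c ≥ 0, and 2^{−c} + Σ_{i=1}^{k} 2^{−ℓ_i} ≤ 1}. If (ℓ*, c*) ∈ G minimizes Δ_e over G, then Σ_{i=1}^{k} 2^{−ℓ*_i} = 1 − 2^{−c*}. -/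
open Filter

lemma sum_upd_mul {k : ℕ} (p f : Fin k → ℝ) (j : Fin k) (b : ℝ) :
    ∑ i, p i * Function.update f j b i = (∑ i, p i * f i) + p j * (b - f j) := by
  have h : ∀ i : Fin k, p i * Function.update f j b i
      = p i * f i + (if i = j then p j * (b - f j) else 0) := by
    intro i
    rcases eq_or_ne i j with rfl | h
    · simp [Function.update_self]; ring
    · simp [Function.update_of_ne h, h]
  simp only [h, Finset.sum_add_distrib, Finset.sum_ite_eq', Finset.mem_univ, if_true]

lemma sum_upd_sq {k : ℕ} (p f : Fin k → ℝ) (j : Fin k) (b : ℝ) :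
    ∑ i, p i * (Function.update f j b i) ^ 2
      = (∑ i, p i * (f i) ^ 2) + p j * (b ^ 2 - (f j) ^ 2) := by
  have h : ∀ i : Fin k, p i * (Function.update f j b i) ^ 2
      = p i * (f i) ^ 2 + (if i = j then p j * (b ^ 2 - (f j) ^ 2) else 0) := by
    intro i
    rcases eq_or_ne i j with rfl | h
    · simp [Function.update_self]; ring
    · simp [Function.update_of_ne h, h]
  simp only [h, Finset.sum_add_distrib, Finset.sum_ite_eq', Finset.mem_univ, if_true]

lemma sum_upd_rpow {k : ℕ} (f : Fin k → ℝ) (j : Fin k) (b : ℝ) :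
    ∑ i, (2:ℝ) ^ (-(Function.update f j b i))
      = (∑ i, (2:ℝ) ^ (-(f i))) + ((2:ℝ) ^ (-b) - (2:ℝ) ^ (-(f j))) := by
  have h : ∀ i : Fin k, (2:ℝ) ^ (-(Function.update f j b i))
      = (2:ℝ) ^ (-(f i)) + (if i = j then (2:ℝ) ^ (-b) - (2:ℝ) ^ (-(f j)) else 0) := by
    intro i
    rcases eq_or_ne i j with rfl | h
    · simp [Function.update_self]
    · simp [Function.update_of_ne h, h]
  simp only [h, Finset.sum_add_distrib, Finset.sum_ite_eq', Finset.mem_univ, if_true]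

lemma deriv_nonneg_right {f : ℝ → ℝ} {a : ℝ} (hf : HasDerivAt f a 0)
    (h : ∀ᶠ t in nhdsWithin 0 (Set.Ioi 0), f 0 ≤ f t) : 0 ≤ a := by
  have hs : Tendsto (slope f 0) (nhdsWithin 0 (Set.Ioi 0)) (nhds a) :=
    (hasDerivAt_iff_tendsto_slope.mp hf).mono_left
      (nhdsWithin_mono 0 (fun x hx => by
        simpa using (ne_of_gt (Set.mem_Ioi.mp hx))))
  refine ge_of_tendsto hs ?_
  filter_upwards [h, self_mem_nhdsWithin] with t ht h0
  rw [slope_def_field]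
  exact div_nonneg (sub_nonneg.2 ht) (by simpa using le_of_lt (Set.mem_Ioi.mp h0))

set_option maxHeartbeats 2000000 in
/-- Lemma 2 of the paper. With waiting-time moments
`â(c) = c(1/q − 1) + 1/(λq)` and `d(c) = ((2−q)(1−q)/q²)c² + (4(1−q)/(λq²))c + 2/(λq)²`, the
average age `Δ_e(ℓ, c) = (E[L²] + 2â(c)E[L] + d(c))/(2(E[L] + â(c))) + E[L]` over the
Kraft-feasible set `G = {(ℓ, c) : ℓ ≥ 0, c ≥ 0, 2^{−c} + ∑ i 2^{−ℓ i} ≤ 1}` is minimized only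
at points satisfying the Kraft inequality with equality: `∑ i 2^{−ℓ* i} = 1 − 2^{−c*}`. -/
theorem stmt_12 (k : ℕ) (hk : 1 ≤ k)
    (p : Fin k → ℝ) (hp : ∀ i, 0 < p i) (hpsum : ∑ i, p i = 1)
    (q lam : ℝ) (hq0 : 0 < q) (hq1 : q < 1) (hlam : 0 < lam)
    (ahat d : ℝ → ℝ)
    (hahat : ahat = fun c => c * (1 / q - 1) + 1 / (lam * q))
    (hd : d = fun c => ((2 - q) * (1 - q) / q ^ 2) * c ^ 2 +
      (4 * (1 - q) / (lam * q ^ 2)) * c + 2 / (lam * q) ^ 2)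
    (Δe : (Fin k → ℝ) → ℝ → ℝ)
    (hΔe : Δe = fun ℓ c =>
      ((∑ i, p i * (ℓ i) ^ 2) + 2 * ahat c * (∑ i, p i * ℓ i) + d c) /
        (2 * ((∑ i, p i * ℓ i) + ahat c)) + ∑ i, p i * ℓ i)
    (G : Set ((Fin k → ℝ) × ℝ))
    (hG : G = {x | (∀ i, 0 ≤ x.1 i) ∧ 0 ≤ x.2 ∧
      (2 : ℝ) ^ (-x.2) + ∑ i, (2 : ℝ) ^ (-(x.1 i)) ≤ 1})
    (ℓs : Fin k → ℝ) (cs : ℝ) (hmem : (ℓs, cs) ∈ G)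
    (hmin : ∀ x ∈ G, Δe ℓs cs ≤ Δe x.1 x.2) :
    ∑ i, (2 : ℝ) ^ (-(ℓs i)) = 1 - (2 : ℝ) ^ (-cs) := by
  classical
  rw [hG] at hmem
  obtain ⟨hℓ0, hc0, hkraft⟩ := hmem
  dsimp only at hℓ0 hc0 hkraft
  by_contra hne
  have hstrict : (2:ℝ) ^ (-cs) + (∑ i, (2:ℝ) ^ (-(ℓs i))) < 1 := by
    rcases lt_or_eq_of_le hkraft with h | h
    · exact h
    · exact absurd (by linarith) hne
  -- positivity of the exponentials
  have h2cs : (0:ℝ) < (2:ℝ) ^ (-cs) := Real.rpow_pos_of_pos (by norm_num) _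
  have hterm : ∀ i : Fin k, (0:ℝ) < (2:ℝ) ^ (-(ℓs i)) :=
    fun i => Real.rpow_pos_of_pos (by norm_num) _
  -- all codeword lengths are strictly positive
  have hℓpos : ∀ i, 0 < ℓs i := by
    intro i
    by_contra hcon
    push_neg at hcon
    have h1 : (1:ℝ) ≤ (2:ℝ) ^ (-(ℓs i)) := by
      calc (1:ℝ) = (2:ℝ) ^ (0:ℝ) := by rw [Real.rpow_zero]
      _ ≤ (2:ℝ) ^ (-(ℓs i)) :=
        Real.rpow_le_rpow_of_exponent_le (by norm_num) (by linarith)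
    have h2 : (2:ℝ) ^ (-(ℓs i)) ≤ ∑ i, (2:ℝ) ^ (-(ℓs i)) :=
      Finset.single_le_sum (fun i _ => (hterm i).le) (Finset.mem_univ i)
    linarith
  -- pick the index with maximal codeword length
  obtain ⟨j, -, hj⟩ := Finset.exists_max_image Finset.univ ℓs
    (Finset.univ_nonempty_iff.mpr ⟨⟨0, hk⟩⟩)
  have hjmax : ∀ i, ℓs i ≤ ℓs j := fun i => hj i (Finset.mem_univ i)
  -- abbreviations
  obtain ⟨u, hu_def⟩ : ∃ x : ℝ, x = 1 / q - 1 := ⟨_, rfl⟩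
  obtain ⟨m, hm_def⟩ : ∃ x : ℝ, x = 1 / (lam * q) := ⟨_, rfl⟩
  have hu : 0 < u := by rw [hu_def]; have := one_lt_one_div hq0 hq1; linarith
  have hm : 0 < m := by rw [hm_def]; positivity
  obtain ⟨S1, hS1⟩ : ∃ x : ℝ, x = ∑ i, p i * ℓs i := ⟨_, rfl⟩
  obtain ⟨S2, hS2⟩ : ∃ x : ℝ, x = ∑ i, p i * (ℓs i) ^ 2 := ⟨_, rfl⟩
  obtain ⟨a0, ha0⟩ : ∃ x : ℝ, x = cs * u + m := ⟨_, rfl⟩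
  obtain ⟨d0, hd0⟩ : ∃ x : ℝ, x = 2 * a0 ^ 2 + u * cs ^ 2 := ⟨_, rfl⟩
  have hS1nonneg : 0 ≤ S1 := by
    rw [hS1]; exact Finset.sum_nonneg fun i _ => mul_nonneg (hp i).le (hℓ0 i)
  have ha0pos : 0 < a0 := by
    rw [ha0]; have := mul_nonneg hc0 hu.le; linarith
  have hDpos : 0 < S1 + a0 := by linarith
  have hane : ahat cs = a0 := by
    rw [hahat, ha0, hu_def, hm_def]
  have hdne : d cs = d0 := by
    rw [hd, hd0, ha0, hu_def, hm_def]
    field_simp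
    ring
  have hS2le : S2 ≤ ℓs j * S1 := by
    rw [hS2, hS1, Finset.mul_sum]
    refine Finset.sum_le_sum fun i _ => ?_
    have h1 : (ℓs i) ^ 2 ≤ ℓs j * ℓs i := by
      have := hjmax i; nlinarith [hℓ0 i]
    calc p i * (ℓs i) ^ 2 ≤ p i * (ℓs j * ℓs i) :=
          mul_le_mul_of_nonneg_left h1 (hp i).le
    _ = ℓs j * (p i * ℓs i) := by ring
  -- the ℓ-direction perturbation
  set F : ℝ → ℝ := fun t =>
    (S2 + p j * ((ℓs j - t) ^ 2 - (ℓs j) ^ 2) + 2 * a0 * (S1 - p j * t) + d0) /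
      (2 * (S1 - p j * t + a0)) + (S1 - p j * t) with hF
  have hFeq : ∀ t : ℝ, Δe (Function.update ℓs j (ℓs j - t)) cs = F t := by
    intro t
    simp only [hΔe]
    rw [sum_upd_mul, sum_upd_sq, hane, hdne, ← hS1, ← hS2, hF]
    ring
  have hF0 : F 0 = Δe ℓs cs := by
    have := hFeq 0
    rw [sub_zero, Function.update_eq_self] at this
    exact this.symm
  -- derivative of F at 0
  have hlin : HasDerivAt (fun t : ℝ => S1 - p j * t) (0 - p j * 1) 0 :=
    (hasDerivAt_const 0 S1).sub ((hasDerivAt_id 0).const_mul (p j))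
  have hb : HasDerivAt (fun t : ℝ => ℓs j - t) (0 - 1) 0 :=
    (hasDerivAt_const 0 (ℓs j)).sub (hasDerivAt_id 0)
  have hb2 := hb.pow 2
  have hnum : HasDerivAt
      (fun t : ℝ => S2 + p j * ((ℓs j - t) ^ 2 - (ℓs j) ^ 2) + 2 * a0 * (S1 - p j * t) + d0)
      (0 + p j * ((2:ℕ) * (ℓs j - 0) ^ (2 - 1) * (0 - 1)) + 2 * a0 * (0 - p j * 1) + 0) 0 := by
    exact (((hasDerivAt_const 0 S2).add
      (((hb2).sub_const ((ℓs j) ^ 2)).const_mul (p j))).add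
      (hlin.const_mul (2 * a0))).add_const d0 |>.congr_deriv (by ring)
  have hden : HasDerivAt (fun t : ℝ => 2 * (S1 - p j * t + a0)) (2 * (0 - p j * 1 + 0)) 0 := by
    exact ((hlin.add_const a0).const_mul 2).congr_deriv (by ring)
  have hdenne : (fun t : ℝ => 2 * (S1 - p j * t + a0)) 0 ≠ 0 := by
    show (2 * (S1 - p j * 0 + a0)) ≠ 0
    have : (0:ℝ) < 2 * (S1 - p j * 0 + a0) := by
      have : S1 - p j * 0 + a0 = S1 + a0 := by ring
      rw [this]; linarith
    exact this.ne'
  have hFderiv : HasDerivAt F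
      (((-2 * p j * ℓs j - 2 * a0 * p j) * (2 * (S1 + a0)) -
          (S2 + 2 * a0 * S1 + d0) * (-2 * p j)) / (2 * (S1 + a0)) ^ 2 - p j) 0 := by
    have h := (hnum.div hden hdenne).add hlin
    refine h.congr_deriv ?_
    push_cast
    ring
  -- first-order condition in the ℓ-direction
  have hfoc1 : 0 ≤ ((-2 * p j * ℓs j - 2 * a0 * p j) * (2 * (S1 + a0)) -
      (S2 + 2 * a0 * S1 + d0) * (-2 * p j)) / (2 * (S1 + a0)) ^ 2 - p j := by
    refine deriv_nonneg_right hFderiv ?_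
    have hcont : ContinuousAt (fun t : ℝ =>
        (2:ℝ) ^ (-cs) + ((∑ i, (2:ℝ) ^ (-(ℓs i))) + ((2:ℝ) ^ (-(ℓs j - t)) - (2:ℝ) ^ (-(ℓs j))))) 0 := by
      have h1 : ContinuousAt (fun t : ℝ => (2:ℝ) ^ (-(ℓs j - t))) 0 := by
        have h3 : ContinuousAt (fun t : ℝ => -(ℓs j - t)) 0 := by fun_prop
        have h2 : ContinuousAt (fun y : ℝ => (2:ℝ) ^ y) ((fun t : ℝ => -(ℓs j - t)) 0) :=
          Real.continuousAt_const_rpow (by norm_num)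
        simpa [Function.comp_def] using ContinuousAt.comp (f := fun t : ℝ => -(ℓs j - t)) h2 h3
      fun_prop
    have hev : ∀ᶠ t in nhds (0:ℝ),
        (2:ℝ) ^ (-cs) + ((∑ i, (2:ℝ) ^ (-(ℓs i))) + ((2:ℝ) ^ (-(ℓs j - t)) - (2:ℝ) ^ (-(ℓs j)))) < 1 := by
      have := hcont.eventually_lt continuousAt_const (by simpa using hstrict)
      simpa using this
    have hev2 : ∀ᶠ t in nhds (0:ℝ), t < ℓs j := eventually_lt_nhds (hℓpos j)
    have := ((hev.and hev2).filter_mono (nhdsWithin_le_nhds (s := Set.Ioi (0:ℝ))))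
    filter_upwards [this, self_mem_nhdsWithin] with t ⟨ht1, ht2⟩ ht0
    have ht0' : 0 < t := Set.mem_Ioi.mp ht0
    have hfeas : (Function.update ℓs j (ℓs j - t), cs) ∈ G := by
      rw [hG]
      refine ⟨?_, hc0, ?_⟩
      · intro i
        show 0 ≤ Function.update ℓs j (ℓs j - t) i
        rcases eq_or_ne i j with rfl | hne'
        · rw [Function.update_self]; linarith
        · rw [Function.update_of_ne hne']; exact hℓ0 i
      · show (2:ℝ) ^ (-cs) + ∑ i, (2:ℝ) ^ (-(Function.update ℓs j (ℓs j - t) i)) ≤ 1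
        rw [sum_upd_rpow]
        linarith
    have := hmin _ hfeas
    rw [show ((Function.update ℓs j (ℓs j - t), cs) : (Fin k → ℝ) × ℝ).1 = Function.update ℓs j (ℓs j - t) from rfl,
      show ((Function.update ℓs j (ℓs j - t), cs) : (Fin k → ℝ) × ℝ).2 = cs from rfl, hFeq t] at this
    rw [hF0]
    exact this
  -- clean form of the first-order condition:  key1
  have hkey1 : 2 * S1 * (S1 + a0) + 2 * (ℓs j + a0) * (S1 + a0) ≤ S2 + u * cs ^ 2 := by
    have hDne : (2 * (S1 + a0)) ≠ 0 := by positivity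
    have hmul : (((-2 * p j * ℓs j - 2 * a0 * p j) * (2 * (S1 + a0)) -
        (S2 + 2 * a0 * S1 + d0) * (-2 * p j)) / (2 * (S1 + a0)) ^ 2 - p j) * (2 * (S1 + a0)) ^ 2
        = 2 * p j * ((S2 + u * cs ^ 2) - (2 * S1 * (S1 + a0) + 2 * (ℓs j + a0) * (S1 + a0))) := by
      rw [hd0]
      field_simp [hDne]
      ring
    have h0 : 0 ≤ 2 * p j * ((S2 + u * cs ^ 2) -
        (2 * S1 * (S1 + a0) + 2 * (ℓs j + a0) * (S1 + a0))) := by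
      rw [← hmul]
      exact mul_nonneg hfoc1 (sq_nonneg _)
    have hpj : (0:ℝ) < 2 * p j := by linarith [hp j]
    have hz := (mul_nonneg_iff_of_pos_left hpj).mp h0
    linarith
  rcases eq_or_lt_of_le hc0 with hcz | hcpos
  · -- case cs = 0
    have hcz' : cs = 0 := hcz.symm
    have ha0m : a0 = m := by rw [ha0, hcz']; ring
    rw [hcz', ha0m] at hkey1
    have hkey1' : 2 * S1 * (S1 + m) + 2 * (ℓs j + m) * (S1 + m) ≤ S2 := by
      have : u * (0:ℝ) ^ 2 = 0 := by ring
      linarith [hkey1, this]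
    have hℓj := hℓpos j
    nlinarith [mul_pos hm hm, mul_nonneg hℓj.le hS1nonneg,
      mul_nonneg hℓj.le hm.le, mul_nonneg hS1nonneg hS1nonneg,
      mul_nonneg hS1nonneg hm.le, hS2le, hkey1', hℓj, hm, hS1nonneg]
  · -- case cs > 0 : use the c-direction perturbation
    set Gf : ℝ → ℝ := fun t =>
      (S2 + 2 * ((cs + t) * u + m) * S1 +
          ((2 * u ^ 2 + u) * (cs + t) ^ 2 + 4 * u * m * (cs + t) + 2 * m ^ 2)) /
        (2 * (S1 + ((cs + t) * u + m))) + S1 with hGf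
    have hGeq : ∀ t : ℝ, Δe ℓs (cs + t) = Gf t := by
      intro t
      simp only [hΔe, hahat, hd]
      rw [← hS1, ← hS2, hGf, hu_def, hm_def]
      congr 2 <;> (field_simp; try ring)
    have hG0 : Gf 0 = Δe ℓs cs := by
      have := hGeq 0
      rw [add_zero] at this
      exact this.symm
    -- derivative of Gf at 0
    have hlin2 : HasDerivAt (fun t : ℝ => (cs + t) * u + m) ((0 + 1) * u) 0 := by
      exact (((hasDerivAt_const 0 cs).add (hasDerivAt_id 0)).mul_const u).add_const m
    have hct : HasDerivAt (fun t : ℝ => cs + t) (0 + 1) 0 :=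
      (hasDerivAt_const 0 cs).add (hasDerivAt_id 0)
    have hnum2 : HasDerivAt (fun t : ℝ => S2 + 2 * ((cs + t) * u + m) * S1 +
        ((2 * u ^ 2 + u) * (cs + t) ^ 2 + 4 * u * m * (cs + t) + 2 * m ^ 2))
        (2 * u * S1 + ((2 * u ^ 2 + u) * (2 * cs) + 4 * u * m)) 0 := by
      have h1 := ((hlin2.const_mul 2).mul_const S1)
      have h2 := (hct.pow 2).const_mul (2 * u ^ 2 + u)
      have h3 := hct.const_mul (4 * u * m)
      have h := ((hasDerivAt_const (0:ℝ) S2).add h1).add (((h2.add h3).add_const (2 * m ^ 2)))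
      refine h.congr_deriv ?_
      push_cast
      ring_nf
    have hden2 : HasDerivAt (fun t : ℝ => 2 * (S1 + ((cs + t) * u + m))) (2 * u) 0 := by
      have h := ((hasDerivAt_const (0:ℝ) S1).add hlin2).const_mul 2
      exact h.congr_deriv (by ring)
    have hden2ne : (fun t : ℝ => 2 * (S1 + ((cs + t) * u + m))) 0 ≠ 0 := by
      show (2 * (S1 + ((cs + 0) * u + m))) ≠ 0
      have h1 : (cs + 0) * u + m = a0 := by rw [ha0]; ring
      rw [h1]
      positivity
    have hGderiv : HasDerivAt Gf
        (((2 * u * S1 + ((2 * u ^ 2 + u) * (2 * cs) + 4 * u * m)) * (2 * (S1 + a0)) -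
            (S2 + 2 * a0 * S1 + d0) * (2 * u)) / (2 * (S1 + a0)) ^ 2) 0 := by
      have h := (hnum2.div hden2 hden2ne).add_const S1
      refine h.congr_deriv ?_
      simp only [add_zero]
      rw [hd0, ha0]
      congr 1 <;> ring
    -- Gf has a (two-sided) local minimum at 0
    have hloc : IsLocalMin Gf 0 := by
      have hcont : ContinuousAt (fun t : ℝ =>
          (2:ℝ) ^ (-(cs + t)) + ∑ i, (2:ℝ) ^ (-(ℓs i))) 0 := by
        have h1 : ContinuousAt (fun t : ℝ => (2:ℝ) ^ (-(cs + t))) 0 := by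
          have h3 : ContinuousAt (fun t : ℝ => -(cs + t)) 0 := by fun_prop
          have h2 : ContinuousAt (fun y : ℝ => (2:ℝ) ^ y) ((fun t : ℝ => -(cs + t)) 0) :=
            Real.continuousAt_const_rpow (by norm_num)
          simpa [Function.comp_def] using ContinuousAt.comp (f := fun t : ℝ => -(cs + t)) h2 h3
        fun_prop
      have hev : ∀ᶠ t in nhds (0:ℝ),
          (2:ℝ) ^ (-(cs + t)) + ∑ i, (2:ℝ) ^ (-(ℓs i)) < 1 := by
        have := hcont.eventually_lt continuousAt_const (by simpa using hstrict)
        simpa using this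
      have hev2 : ∀ᶠ t in nhds (0:ℝ), -cs < t := eventually_gt_nhds (by linarith)
      filter_upwards [hev, hev2] with t ht1 ht2
      have hfeas : (ℓs, cs + t) ∈ G := by
        rw [hG]
        exact ⟨hℓ0, show (0:ℝ) ≤ cs + t by linarith, ht1.le⟩
      have := hmin _ hfeas
      rw [show ((ℓs, cs + t) : (Fin k → ℝ) × ℝ).1 = ℓs from rfl,
        show ((ℓs, cs + t) : (Fin k → ℝ) × ℝ).2 = cs + t from rfl, hGeq t] at this
      rw [hG0]
      exact this
    have hfoc2 := hloc.hasDerivAt_eq_zero hGderiv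
    -- clean form :  key2
    have hkey2 : S2 + u * cs ^ 2 = 2 * (S1 + a0) ^ 2 + 2 * cs * (S1 + a0) := by
      have hDne : (2 * (S1 + a0)) ≠ 0 := by positivity
      have hmul : ((2 * u * S1 + ((2 * u ^ 2 + u) * (2 * cs) + 4 * u * m)) * (2 * (S1 + a0)) -
          (S2 + 2 * a0 * S1 + d0) * (2 * u)) / (2 * (S1 + a0)) ^ 2 * (2 * (S1 + a0)) ^ 2
          = 2 * u * ((2 * (S1 + a0) ^ 2 + 2 * cs * (S1 + a0)) - (S2 + u * cs ^ 2)) := by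
        rw [hd0, ha0]
        field_simp [hDne]
        ring
      rw [hfoc2, zero_mul] at hmul
      have h2u : (0:ℝ) < 2 * u := by linarith
      have := (mul_eq_zero.mp hmul.symm).resolve_left h2u.ne'
      linarith [sub_eq_zero.mp this]
    -- derive the contradiction
    have hE : 0 < S1 + a0 := hDpos
    have h1 : ℓs j ≤ cs := by nlinarith [hkey1, hkey2, hE]
    have h2 : S2 ≤ cs * S1 := by
      calc S2 ≤ ℓs j * S1 := hS2le
      _ ≤ cs * S1 := mul_le_mul_of_nonneg_right h1 hS1nonneg
    rw [ha0] at hkey2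
    nlinarith [hkey2, h2, mul_pos hcpos hm, mul_pos (mul_pos hu hcpos) hcpos,
      mul_nonneg hcpos.le hS1nonneg, mul_nonneg hS1nonneg hS1nonneg,
      mul_nonneg hS1nonneg (mul_nonneg hcpos.le hu.le), mul_nonneg hS1nonneg hm.le,
      mul_pos hm hm, mul_pos (mul_pos hu hcpos) hm]
end
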